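/- Let (λ, o) be one of the pairs (1,2),(2,2),(1,4),(2,4),(1,3),(3,3),(1,6). Let (r,a,b,s) ∈ ℤ⁴ with r > 0, a·b = r·s and gcd(r,a,b,s) = 1 (a primitive isotropic Mukai vector). Then for every ε > 0 there exists (r',a',b',s') ∈ ℤ⁴ with r' > 0, a'·b' = r'·s', gcd(r',a',b',s') = 1, gcd(r', a', (o/λ)·b', o·s') = o, and |a'/r' − a/r| < ε and |b'/r' − b/r| < ε. -/

import Mathlib

lemma approx_step (c r M : ℤ) (hr : 0 < r) (hM : 0 < M) :
    ∃ x : ℤ, M ∣ x - 1 ∧ c - M * r < x * r ∧ x * r ≤ c := by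
  set q := c / r with hq
  set t := (q - 1) / M with ht
  have e1 : M * t + (q - 1) % M = q - 1 := by rw [ht]; exact Int.mul_ediv_add_emod (q-1) M
  have e2 : 0 ≤ (q - 1) % M := Int.emod_nonneg (q - 1) hM.ne'
  have e3 : (q - 1) % M < M := Int.emod_lt_of_pos (q - 1) hM
  have f1 : r * q + c % r = c := by rw [hq]; exact Int.mul_ediv_add_emod c r
  have f2 : 0 ≤ c % r := Int.emod_nonneg c hr.ne'
  have f3 : c % r < r := Int.emod_lt_of_pos c hr
  refine ⟨1 + M * t, ⟨t, by ring⟩, by nlinarith, by nlinarith⟩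

lemma natAbs_dvd_of_dvd (p : ℕ) (x : ℤ) (h : p ∣ x.natAbs) : (p:ℤ) ∣ x :=
  (Int.natCast_dvd_natCast.mpr h).trans (Int.natAbs_dvd.mpr dvd_rfl)

lemma no_prime_dvd_consec (p : ℕ) (hp : p.Prime) (z D : ℤ) (h1 : (p:ℤ) ∣ D)
    (h2 : D ∣ z - 1) (h3 : (p:ℤ) ∣ z) : False := by
  have : (p:ℤ) ∣ 1 := by
    have := dvd_sub h3 (h1.trans h2)
    simpa using this
  have : p ∣ 1 := by exact_mod_cast this
  exact hp.one_lt.ne' (Nat.dvd_one.mp this)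

lemma int_gcd4 (A B C D : ℤ) : Int.gcd A (Int.gcd B (Int.gcd C D : ℤ) : ℤ)
    = Nat.gcd A.natAbs (Nat.gcd B.natAbs (Nat.gcd C.natAbs D.natAbs)) := by
  simp [Int.gcd]

lemma key (lam o : ℤ) (hlam : 0 < lam) (ho : 0 < o) (hdvd : lam ∣ o)
    (r a b : ℤ) (hr : 0 < r) (ε : ℝ) (hε : 0 < ε) :
    ∃ r' a' b' s' : ℤ, 0 < r' ∧ a' * b' = r' * s' ∧
      Int.gcd r' (Int.gcd a' (Int.gcd b' s' : ℤ) : ℤ) = 1 ∧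
      (Int.gcd r' (Int.gcd a' (Int.gcd (o / lam * b') (o * s') : ℤ) : ℤ) : ℤ) = o ∧
      |(a' : ℝ) / (r' : ℝ) - (a : ℝ) / (r : ℝ)| < ε ∧
      |(b' : ℝ) / (r' : ℝ) - (b : ℝ) / (r : ℝ)| < ε := by
  -- choose k with 2/ε < 2^k
  obtain ⟨k, hk⟩ := exists_nat_gt (2/ε)
  have hk2 : (2:ℝ)/ε < 2^k := by
    have : (k:ℝ) < 2^k := by exact_mod_cast Nat.lt_two_pow_self (n := k)
    linarith
  -- construct x
  obtain ⟨x, hx1, hx2, hx3⟩ := approx_step (lam * 2^k * a) r (2*lam) hr (by linarith)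
  have hx0 : x ≠ 0 := by
    rintro rfl
    have h1 : (2*lam) ∣ (1:ℤ) := by simpa using hx1.neg_right
    have := Int.le_of_dvd one_pos h1
    linarith
  set X := x.natAbs with hXdef
  have hX0 : 0 < X := Int.natAbs_pos.mpr hx0
  have hXx : ((X:ℤ)) = |x| := Int.abs_eq_natAbs x ▸ rfl
  -- choose m with 6X/ε < 3^m
  obtain ⟨m, hm⟩ := exists_nat_gt ((6*X:ℝ)/ε)
  have hm2 : (6*(X:ℝ))/ε < 3^m := by
    have : (m:ℝ) < 3^m := by exact_mod_cast Nat.lt_pow_self (n := m) (by norm_num)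
    push_cast at hm ⊢
    linarith
  -- construct y
  have hS : (0:ℤ) < 6*o*(X:ℤ) := by positivity
  obtain ⟨y, hy1, hy2, hy3⟩ := approx_step (o * 3^m * b) r (6*o*(X:ℤ)) hr hS
  set Y := y.natAbs with hYdef
  -- divisibility facts
  have hx1' : (2*lam) ∣ x - 1 := hx1
  have hy1' : (6*o*(X:ℤ)) ∣ y - 1 := hy1
  have hXdvd : ((X:ℤ)) ∣ 6*o*(X:ℤ) := ⟨6*o, by ring⟩
  have h3dvd : (3:ℤ) ∣ 6*o*(X:ℤ) := ⟨2*o*(X:ℤ), by ring⟩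
  have hodvd : o ∣ 6*o*(X:ℤ) := ⟨6*(X:ℤ), by ring⟩
  -- key coprimality facts (nat level)
  have h2X : ¬ (2 ∣ X) := by
    intro hd
    exact no_prime_dvd_consec 2 Nat.prime_two x (2*lam)
      (by push_cast; exact dvd_mul_right 2 lam) hx1' (natAbs_dvd_of_dvd 2 x hd)
  have h3Y : ¬ (3 ∣ Y) := by
    intro hd
    exact no_prime_dvd_consec 3 Nat.prime_three y (6*o*(X:ℤ)) h3dvd hy1'
      (natAbs_dvd_of_dvd 3 y hd)
  have cXY : Nat.Coprime X Y := by
    have hg1 : ((Nat.gcd X Y : ℤ)) ∣ y - 1 := by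
      have : ((Nat.gcd X Y : ℤ)) ∣ (X:ℤ) := Int.natCast_dvd_natCast.mpr (Nat.gcd_dvd_left X Y)
      exact (this.trans hXdvd).trans hy1'
    have hg2 : ((Nat.gcd X Y : ℤ)) ∣ y := natAbs_dvd_of_dvd _ y (Nat.gcd_dvd_right X Y)
    have : ((Nat.gcd X Y : ℤ)) ∣ 1 := by
      have := dvd_sub hg2 hg1; simpa using this
    exact Nat.dvd_one.mp (by exact_mod_cast this)
  -- define the vector
  refine ⟨o*(lam*((3:ℤ)^m*2^k)), o*((3:ℤ)^m*x), lam*((2:ℤ)^k*y), x*y, ?_, by ring, ?_, ?_, ?_, ?_⟩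
  · positivity
  · -- primitivity
    rw [int_gcd4]
    have hR : (o*(lam*((3:ℤ)^m*2^k))).natAbs = o.natAbs*(lam.natAbs*(3^m*2^k)) := by
      simp [Int.natAbs_mul, Int.natAbs_pow]
    have hA : (o*((3:ℤ)^m*x)).natAbs = o.natAbs*(3^m*X) := by
      simp [Int.natAbs_mul, Int.natAbs_pow, hXdef]
    have hB : (lam*((2:ℤ)^k*y)).natAbs = lam.natAbs*(2^k*Y) := by
      simp [Int.natAbs_mul, Int.natAbs_pow, hYdef]
    have hSn : (x*y).natAbs = X*Y := by simp [Int.natAbs_mul, hXdef, hYdef]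
    rw [hR, hA, hB, hSn]
    by_contra hne
    obtain ⟨p, pp, pdvd⟩ := Nat.exists_prime_and_dvd hne
    have pR := pdvd.trans (Nat.gcd_dvd_left _ _)
    have prest := pdvd.trans (Nat.gcd_dvd_right _ _)
    have pA := prest.trans (Nat.gcd_dvd_left _ _)
    have prest2 := prest.trans (Nat.gcd_dvd_right _ _)
    have pB := prest2.trans (Nat.gcd_dvd_left _ _)
    have pS := prest2.trans (Nat.gcd_dvd_right _ _)
    rcases (Nat.Prime.dvd_mul pp).mp pS with pX | pY
    · -- p ∣ X
      have px : (p:ℤ) ∣ x := natAbs_dvd_of_dvd p x pX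
      rcases (Nat.Prime.dvd_mul pp).mp pB with pL | pB2
      · -- p ∣ lam
        have : (p:ℤ) ∣ 2*lam := (natAbs_dvd_of_dvd p lam pL).mul_left 2
        exact no_prime_dvd_consec p pp x (2*lam) this hx1' px
      · rcases (Nat.Prime.dvd_mul pp).mp pB2 with p2 | pY2
        · -- p ∣ 2^k
          have : (p:ℤ) ∣ 2*lam := by
            have := pp.dvd_of_dvd_pow p2
            exact_mod_cast (Int.natCast_dvd_natCast.mpr this).mul_right lam
          exact no_prime_dvd_consec p pp x (2*lam) this hx1' px
        · -- p ∣ Y, together with p ∣ X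
          have py : (p:ℤ) ∣ y := natAbs_dvd_of_dvd p y pY2
          have : (p:ℤ) ∣ 6*o*(X:ℤ) :=
            ((Int.natCast_dvd_natCast.mpr pX).trans hXdvd)
          exact no_prime_dvd_consec p pp y _ this hy1' py
    · -- p ∣ Y
      have py : (p:ℤ) ∣ y := natAbs_dvd_of_dvd p y pY
      have hpd : (p:ℤ) ∣ 6*o*(X:ℤ) := by
        rcases (Nat.Prime.dvd_mul pp).mp pA with pO | pA2
        · exact (natAbs_dvd_of_dvd p o pO).trans hodvd
        · rcases (Nat.Prime.dvd_mul pp).mp pA2 with p3 | pX2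
          · exact (Int.natCast_dvd_natCast.mpr (pp.dvd_of_dvd_pow p3)).trans
              (by exact_mod_cast h3dvd)
          · exact (Int.natCast_dvd_natCast.mpr pX2).trans hXdvd
      exact no_prime_dvd_consec p pp y _ hpd hy1' py
  · -- gcd with o factor equals o
    have hquot : o / lam * (lam*((2:ℤ)^k*y)) = o * ((2:ℤ)^k*y) := by
      rw [← mul_assoc, Int.ediv_mul_cancel hdvd]
    rw [hquot, int_gcd4]
    have hR : (o*(lam*((3:ℤ)^m*2^k))).natAbs = o.natAbs*(lam.natAbs*(3^m*2^k)) := by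
      simp [Int.natAbs_mul, Int.natAbs_pow]
    have hA : (o*((3:ℤ)^m*x)).natAbs = o.natAbs*(3^m*X) := by
      simp [Int.natAbs_mul, Int.natAbs_pow, hXdef]
    have hB : (o*((2:ℤ)^k*y)).natAbs = o.natAbs*(2^k*Y) := by
      simp [Int.natAbs_mul, Int.natAbs_pow, hYdef]
    have hSn : (o*(x*y)).natAbs = o.natAbs*(X*Y) := by simp [Int.natAbs_mul, hXdef, hYdef]
    rw [hR, hA, hB, hSn, Nat.gcd_mul_left, Nat.gcd_mul_left, Nat.gcd_mul_left]
    have hG2 : Nat.gcd (lam.natAbs*(3^m*2^k)) (Nat.gcd (3^m*X) (Nat.gcd (2^k*Y) (X*Y))) = 1 := by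
      set G := Nat.gcd (lam.natAbs*(3^m*2^k)) (Nat.gcd (3^m*X) (Nat.gcd (2^k*Y) (X*Y))) with hG
      have g1 : G ∣ 3^m*X := (Nat.gcd_dvd_right _ _).trans (Nat.gcd_dvd_left _ _)
      have g2 : G ∣ 2^k*Y :=
        ((Nat.gcd_dvd_right _ _).trans (Nat.gcd_dvd_right _ _)).trans (Nat.gcd_dvd_left _ _)
      have c32 : Nat.Coprime (3^m) (2^k) := Nat.Coprime.pow _ _ (by norm_num)
      have c3Y : Nat.Coprime (3^m) Y :=
        Nat.Coprime.pow_left m ((Nat.Prime.coprime_iff_not_dvd Nat.prime_three).mpr h3Y)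
      have cX2 : Nat.Coprime X (2^k) :=
        Nat.Coprime.pow_right k (Nat.coprime_comm.mp
          ((Nat.Prime.coprime_iff_not_dvd Nat.prime_two).mpr h2X))
      have cop : Nat.Coprime (3^m*X) (2^k*Y) :=
        Nat.Coprime.mul (c32.mul_right c3Y) (cX2.mul_right cXY)
      exact Nat.dvd_one.mp (cop ▸ Nat.dvd_gcd g1 g2)
    rw [hG2, mul_one]
    exact Int.natAbs_of_nonneg ho.le
  · -- slope bound for a
    have hD : (0:ℝ) < (lam:ℝ)*2^k*r := by positivity
    have heq : ((o*((3:ℤ)^m*x) : ℤ):ℝ) / ((o*(lam*((3:ℤ)^m*2^k)) : ℤ):ℝ) - (a:ℝ)/(r:ℝ)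
        = ((x*r - lam*2^k*a : ℤ):ℝ) / ((lam:ℝ)*2^k*r) := by
      have h1 : ((o:ℝ)) ≠ 0 := by positivity
      have h2 : ((lam:ℝ)) ≠ 0 := by positivity
      have h3 : ((r:ℝ)) ≠ 0 := by positivity
      have h4 : ((3:ℝ))^m ≠ 0 := by positivity
      have h5 : ((2:ℝ))^k ≠ 0 := by positivity
      push_cast
      field_simp
    rw [heq, abs_div, abs_of_pos hD, div_lt_iff₀ hD]
    have hnum : |((x*r - lam*2^k*a : ℤ):ℝ)| < 2*(lam:ℝ)*r := by
      rw [abs_lt]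
      constructor
      · have : -(2*lam*r) < x*r - lam*2^k*a := by linarith [hx2]
        exact_mod_cast (by push_cast; exact_mod_cast this : (-(2*(lam:ℝ)*r) < ((x*r - lam*2^k*a : ℤ):ℝ)))
      · have : (x*r - lam*2^k*a : ℤ) ≤ 0 := by linarith [hx3]
        have h0 : ((x*r - lam*2^k*a : ℤ):ℝ) ≤ 0 := by exact_mod_cast this
        have hpos : (0:ℝ) < 2*(lam:ℝ)*r := by
          have h2 : (0:ℝ) < (lam:ℝ) := by exact_mod_cast hlam
          have h3 : (0:ℝ) < (r:ℝ) := by exact_mod_cast hr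
          positivity
        linarith
    have h2e : (2:ℝ) < ε * 2^k := by
      rw [div_lt_iff₀ hε] at hk2; linarith [hk2]
    have hlr : (0:ℝ) < (lam:ℝ)*(r:ℝ) := by positivity
    nlinarith [hnum, h2e, hlr]
  · -- slope bound for b
    have hD : (0:ℝ) < (o:ℝ)*3^m*r := by positivity
    have heq : ((lam*((2:ℤ)^k*y) : ℤ):ℝ) / ((o*(lam*((3:ℤ)^m*2^k)) : ℤ):ℝ) - (b:ℝ)/(r:ℝ)
        = ((y*r - o*3^m*b : ℤ):ℝ) / ((o:ℝ)*3^m*r) := by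
      have h1 : ((o:ℝ)) ≠ 0 := by positivity
      have h2 : ((lam:ℝ)) ≠ 0 := by positivity
      have h3 : ((r:ℝ)) ≠ 0 := by positivity
      have h4 : ((3:ℝ))^m ≠ 0 := by positivity
      have h5 : ((2:ℝ))^k ≠ 0 := by positivity
      push_cast
      field_simp
    rw [heq, abs_div, abs_of_pos hD, div_lt_iff₀ hD]
    have hnum : |((y*r - o*3^m*b : ℤ):ℝ)| < 6*(o:ℝ)*(X:ℝ)*r := by
      rw [abs_lt]
      constructor
      · have : -(6*o*(X:ℤ)*r) < y*r - o*3^m*b := by linarith [hy2]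
        exact_mod_cast (by push_cast; exact_mod_cast this :
          (-(6*(o:ℝ)*(X:ℝ)*r) < ((y*r - o*3^m*b : ℤ):ℝ)))
      · have : (y*r - o*3^m*b : ℤ) ≤ 0 := by linarith [hy3]
        have h0 : ((y*r - o*3^m*b : ℤ):ℝ) ≤ 0 := by exact_mod_cast this
        have hpos : (0:ℝ) < 6*(o:ℝ)*(X:ℝ)*r := by
          have h2 : (0:ℝ) < (o:ℝ) := by exact_mod_cast ho
          have h3 : (0:ℝ) < (r:ℝ) := by exact_mod_cast hr
          have h4 : (0:ℝ) < (X:ℝ) := by exact_mod_cast hX0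
          positivity
        linarith
    have h6e : 6*(X:ℝ) < ε * 3^m := by
      rw [div_lt_iff₀ hε] at hm2; linarith [hm2]
    have hor : (0:ℝ) < (o:ℝ)*(r:ℝ) := by positivity
    nlinarith [hnum, h6e, hor]


/-- Every primitive isotropic Mukai vector on a bielliptic surface (with invariants
`(lam, o)` among the seven possibilities) is arbitrarily close, in the sense of slopes,
to a primitive isotropic Mukai vector `v₀` with `l(v₀) = o`. -/
theorem stmt_2 (lam o : ℤ)
    (h : (lam, o) = (1, 2) ∨ (lam, o) = (2, 2) ∨ (lam, o) = (1, 4) ∨ (lam, o) = (2, 4) ∨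
      (lam, o) = (1, 3) ∨ (lam, o) = (3, 3) ∨ (lam, o) = (1, 6))
    (r a b s : ℤ) (hr : 0 < r) (hiso : a * b = r * s)
    (hprim : Int.gcd r (Int.gcd a (Int.gcd b s : ℤ) : ℤ) = 1)
    (ε : ℝ) (hε : 0 < ε) :
    ∃ r' a' b' s' : ℤ, 0 < r' ∧ a' * b' = r' * s' ∧
      Int.gcd r' (Int.gcd a' (Int.gcd b' s' : ℤ) : ℤ) = 1 ∧
      (Int.gcd r' (Int.gcd a' (Int.gcd (o / lam * b') (o * s') : ℤ) : ℤ) : ℤ) = o ∧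
      |(a' : ℝ) / (r' : ℝ) - (a : ℝ) / (r : ℝ)| < ε ∧
      |(b' : ℝ) / (r' : ℝ) - (b : ℝ) / (r : ℝ)| < ε := by
  have hfacts : 0 < lam ∧ 0 < o ∧ lam ∣ o := by
    rcases h with h|h|h|h|h|h|h <;>
      (injection h with h1 h2; subst h1; subst h2; exact ⟨by norm_num, by norm_num, by decide⟩)
  exact key lam o hfacts.1 hfacts.2.1 hfacts.2.2 r a b hr ε hε
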